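/- For every integer k ≥ 2 and every integer m with 1 ≤ m ≤ k, Σ_{i=1}^{k} (−1)^{m+i} (m+i−2)! / (((i−1)!)² (k−i)!) = δ_{m,k}, where δ_{m,k} is the Kronecker delta (equal to 1 if m = k and 0 otherwise). -/

import Mathlib

open Finset

open Function fwdDiff


lemma delta_iter_choose (r n : ℕ) (h : r ≤ n) :
    (fwdDiff (1:ℕ))^[n] (fun x => ((x.choose r : ℤ))) = fun _ => if n = r then (1:ℤ) else 0 := by
  rcases eq_or_lt_of_le h with rfl | hlt
  · have := fwdDiff_iter_choose 0 r
    simp only [add_zero] at this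
    simp [this]
  · obtain ⟨s, rfl⟩ : ∃ s, n = s + 1 + r := ⟨n - r - 1, by omega⟩
    have h0 := fwdDiff_iter_choose 0 r
    simp only [add_zero] at h0
    rw [Function.iterate_add_apply, h0]
    simp only [Nat.choose_zero_right, Nat.cast_one]
    rw [Function.iterate_succ_apply, fwdDiff_const]
    rw [Function.iterate_fixed (fwdDiff_const 1 (0:ℤ))]
    simp [(by omega : ¬ s + 1 + r = r)]

lemma negpow (a b : ℕ) (h : a % 2 = b % 2) : (-1:ℚ)^a = (-1:ℚ)^b := by
  rcases Nat.even_or_odd a with ha | ha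
  · have hb : Even b := Nat.even_iff.2 (by have := Nat.even_iff.1 ha; omega)
    rw [ha.neg_one_pow, hb.neg_one_pow]
  · have hb : Odd b := Nat.odd_iff.2 (by have := Nat.odd_iff.1 ha; omega)
    rw [ha.neg_one_pow, hb.neg_one_pow]

lemma key (r n : ℕ) (h : r ≤ n) :
    ∑ j ∈ Finset.range (n+1), (-1:ℤ)^(n-j) * (n.choose j) * ((r+j).choose r)
      = if n = r then 1 else 0 := by
  have H := fwdDiff_iter_eq_sum_shift (1:ℕ) (fun x => ((x.choose r : ℤ))) n r
  rw [delta_iter_choose r n h] at H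
  simpa only [smul_eq_mul, mul_one, mul_assoc] using H.symm

/-- For `k ≥ 2` and `1 ≤ m ≤ k`,
`∑_{i=1}^k (-1)^{m+i} (m+i-2)! / (((i-1)!)² (k-i)!) = δ_{m,k}`. -/
theorem row_dot_b_eq_kronecker (k : ℕ) (hk : 2 ≤ k) (m : ℕ) (hm1 : 1 ≤ m) (hm2 : m ≤ k) :
    ∑ i ∈ Finset.Icc 1 k,
        (-1 : ℚ) ^ (m + i) * ((m + i - 2).factorial : ℚ)
          / (((i - 1).factorial : ℚ) ^ 2 * ((k - i).factorial : ℚ))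
      = if m = k then 1 else 0 := by
  obtain ⟨r, rfl⟩ : ∃ r, m = r + 1 := ⟨m - 1, by omega⟩
  obtain ⟨n, rfl⟩ : ∃ n, k = n + 1 := ⟨k - 1, by omega⟩
  have hrn : r ≤ n := by omega
  rw [← Finset.Ico_add_one_right_eq_Icc, Finset.sum_Ico_eq_sum_range]
  simp only [Nat.add_sub_cancel]
  have step : ∀ j ∈ Finset.range (n+1),
      (-1 : ℚ) ^ (r + 1 + (1 + j)) * (((r + 1 + (1 + j) - 2).factorial : ℚ))
          / (((1 + j - 1).factorial : ℚ) ^ 2 * (((n + 1 - (1 + j)).factorial : ℚ)))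
        = ((r.factorial : ℚ) / n.factorial) * (-1)^(n+r) *
          (((-1:ℤ)^(n-j) * (n.choose j) * ((r+j).choose r) : ℤ) : ℚ) := by
    intro j hj
    have hjn : j ≤ n := by simpa using Nat.lt_succ_iff.mp (Finset.mem_range.mp hj)
    have e1 : r + 1 + (1 + j) - 2 = r + j := by omega
    have e2 : 1 + j - 1 = j := by omega
    have e3 : n + 1 - (1 + j) = n - j := by omega
    rw [e1, e2, e3]
    have hc1 : ((n.choose j : ℚ)) = n.factorial / (j.factorial * (n-j).factorial) := by
      rw [Nat.cast_choose ℚ hjn]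
    have hc2 : (((r+j).choose r : ℚ)) = (r+j).factorial / (r.factorial * j.factorial) := by
      rw [Nat.cast_choose ℚ (Nat.le_add_right r j), Nat.add_sub_cancel_left]
    push_cast [hc1, hc2]
    have hsign : (-1:ℚ)^(r+1+(1+j)) = (-1)^(n+r) * (-1)^(n-j) := by
      rw [← pow_add]
      exact negpow _ _ (by omega)
    rw [hsign]
    have f1 : (j.factorial : ℚ) ≠ 0 := Nat.cast_ne_zero.mpr (Nat.factorial_ne_zero j)
    have f2 : ((n-j).factorial : ℚ) ≠ 0 := Nat.cast_ne_zero.mpr (Nat.factorial_ne_zero _)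
    have f3 : (n.factorial : ℚ) ≠ 0 := Nat.cast_ne_zero.mpr (Nat.factorial_ne_zero n)
    have f4 : (r.factorial : ℚ) ≠ 0 := Nat.cast_ne_zero.mpr (Nat.factorial_ne_zero r)
    field_simp
  rw [Finset.sum_congr rfl step, ← Finset.mul_sum, ← Int.cast_sum, key r n hrn]
  by_cases hnr : n = r
  · subst hnr
    rw [if_pos rfl, if_pos rfl, Int.cast_one, mul_one,
      div_self (Nat.cast_ne_zero.mpr n.factorial_ne_zero), one_mul,
      (by ring : n + n = 2*n), pow_mul]
    norm_num
  · rw [if_neg hnr, if_neg (by omega : ¬ r + 1 = n + 1), Int.cast_zero, mul_zero]
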